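/- Let X and Z be real Banach spaces such that Z is a quotient of X, and suppose that every compact operator u : ℓ₁ → X can be written as u = v ∘ w with w : ℓ₁ → Z a compact operator and v : Z → X an approximable operator. Then X has property (F̄). -/

import Mathlib

set_option maxSynthPendingDepth 3

open Filter Topology Metric NormedSpace Function

/-- `u` is a finite-rank operator: its range is finite-dimensional. -/
def FinRankOp {X Y : Type*} [NormedAddCommGroup X] [NormedSpace ℝ X]
    [NormedAddCommGroup Y] [NormedSpace ℝ Y] (u : X →L[ℝ] Y) : Prop :=
  FiniteDimensional ℝ (LinearMap.range (u : X →ₗ[ℝ] Y))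

/-- `u` is approximable: a limit in operator norm of finite-rank operators. -/
def ApproxOp {X Y : Type*} [NormedAddCommGroup X] [NormedSpace ℝ X]
    [NormedAddCommGroup Y] [NormedSpace ℝ Y] (u : X →L[ℝ] Y) : Prop :=
  u ∈ closure {f : X →L[ℝ] Y | FinRankOp f}

/-- `u` is a compact operator: it maps the closed unit ball to a relatively compact set. -/
def CompactOp {X Y : Type*} [NormedAddCommGroup X] [NormedSpace ℝ X]
    [NormedAddCommGroup Y] [NormedSpace ℝ Y] (u : X →L[ℝ] Y) : Prop :=
  IsCompact (closure (u '' Metric.closedBall 0 1))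

/-- Property (𝒦): every compact subset is contained in the closure of the image of the
closed unit ball under some compact operator `X → X`. -/
def PropertyK (X : Type*) [NormedAddCommGroup X] [NormedSpace ℝ X] : Prop :=
  ∀ K : Set X, IsCompact K →
    ∃ v : X →L[ℝ] X, CompactOp v ∧ K ⊆ closure (v '' Metric.closedBall 0 1)

/-- Property (F̄): every compact subset is contained in the closure of the image of the
closed unit ball under some approximable operator `X → X`. -/
def PropertyF (X : Type*) [NormedAddCommGroup X] [NormedSpace ℝ X] : Prop :=
  ∀ K : Set X, IsCompact K →
    ∃ v : X →L[ℝ] X, ApproxOp v ∧ K ⊆ closure (v '' Metric.closedBall 0 1)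

/-- The Banach space ℓ₁ of absolutely summable real sequences. -/
noncomputable abbrev ellOne : Type := lp (fun _ : ℕ => ℝ) 1

/-! ### Auxiliary lemmas -/

lemma finRankOp_zero {X Y : Type*} [NormedAddCommGroup X] [NormedSpace ℝ X]
    [NormedAddCommGroup Y] [NormedSpace ℝ Y] : FinRankOp (0 : X →L[ℝ] Y) := by
  unfold FinRankOp
  have : LinearMap.range ((0 : X →L[ℝ] Y) : X →ₗ[ℝ] Y) = ⊥ := by simp
  rw [this]
  infer_instance

lemma approxOp_zero {X Y : Type*} [NormedAddCommGroup X] [NormedSpace ℝ X]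
    [NormedAddCommGroup Y] [NormedSpace ℝ Y] : ApproxOp (0 : X →L[ℝ] Y) :=
  subset_closure finRankOp_zero

lemma approxOp_comp {X Z Y : Type*} [NormedAddCommGroup X] [NormedSpace ℝ X]
    [NormedAddCommGroup Z] [NormedSpace ℝ Z]
    [NormedAddCommGroup Y] [NormedSpace ℝ Y]
    {v : Z →L[ℝ] Y} (hv : ApproxOp v) (q : X →L[ℝ] Z) :
    ApproxOp (v.comp q) := by
  have hcont : Continuous fun f : Z →L[ℝ] Y => f.comp q :=
    ((ContinuousLinearMap.compL ℝ X Z Y).flip q).continuous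
  have h1 : (fun f : Z →L[ℝ] Y => f.comp q) '' {f | FinRankOp f}
      ⊆ {f : X →L[ℝ] Y | FinRankOp f} := by
    rintro _ ⟨f, hf, rfl⟩
    have hle : LinearMap.range ((f.comp q : X →L[ℝ] Y) : X →ₗ[ℝ] Y) ≤ LinearMap.range (f : Z →ₗ[ℝ] Y) := by
      rintro _ ⟨x, rfl⟩
      exact ⟨q x, rfl⟩
    haveI : FiniteDimensional ℝ (LinearMap.range (f : Z →ₗ[ℝ] Y)) := hf
    exact Submodule.finiteDimensional_of_le hle
  have h2 := image_closure_subset_closure_image (s := {f : Z →L[ℝ] Y | FinRankOp f}) hcont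
  exact closure_mono h1 (h2 ⟨v, hv, rfl⟩)

lemma sum_smul_mem_convex {E : Type*} [AddCommGroup E] [Module ℝ E] {t : Set E}
    (ht : Convex ℝ t) (h0 : (0 : E) ∈ t) (N : ℕ) (c : ℕ → ℝ) (p : ℕ → E)
    (hc : ∀ i, 0 ≤ c i) (hp : ∀ i, p i ∈ t)
    (hsum : ∑ i ∈ Finset.range N, c i ≤ 1) :
    ∑ i ∈ Finset.range N, c i • p i ∈ t := by
  set w : ℕ → ℝ := fun i => if i < N then c i else 1 - ∑ j ∈ Finset.range N, c j with hw
  set z : ℕ → E := fun i => if i < N then p i else 0 with hz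
  have key := ht.sum_mem (t := Finset.range (N + 1)) (w := w) (z := z)
    (fun i _ => by
      by_cases hi : i < N
      · simpa [hw, hi] using hc i
      · simp only [hw, if_neg hi]
        linarith)
    (by
      rw [Finset.sum_range_succ]
      have h1 : ∑ i ∈ Finset.range N, w i = ∑ i ∈ Finset.range N, c i :=
        Finset.sum_congr rfl fun i hi => by simp [hw, Finset.mem_range.1 hi]
      rw [h1]
      simp [hw])
    (fun i _ => by
      by_cases hi : i < N
      · simpa [hz, hi] using hp i
      · simpa [hz, hi] using h0)
  rw [Finset.sum_range_succ] at key
  have h1 : ∀ i ∈ Finset.range N, w i • z i = c i • p i := fun i hi => by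
    have hi' := Finset.mem_range.1 hi
    simp [hw, hz, hi']
  rw [Finset.sum_congr rfl h1] at key
  simpa [hz] using key

lemma ellOne_summable_norm (a : ellOne) : Summable fun n => ‖(a : ∀ _ : ℕ, ℝ) n‖ := by
  have := Memℓp.summable (p := (1 : ENNReal)) (by norm_num) (lp.memℓp a)
  simpa using this

lemma ellOne_norm_eq (a : ellOne) : ‖a‖ = ∑' n, ‖(a : ∀ _ : ℕ, ℝ) n‖ := by
  have := lp.norm_eq_tsum_rpow (p := (1 : ENNReal)) (by norm_num) a
  simpa using this

/-- The Lemma: if `Z` is a quotient of `X` and every compact operator `ℓ₁ → X` factors as an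
approximable operator `Z → X` following a compact operator `ℓ₁ → Z`, then `X` has
property (F̄). -/
theorem property_F_of_factorization_through_quotient
    (X : Type u) [NormedAddCommGroup X] [NormedSpace ℝ X] [CompleteSpace X]
    (Z : Type v) [NormedAddCommGroup Z] [NormedSpace ℝ Z] [CompleteSpace Z]
    (q : X →L[ℝ] Z) (hq : Surjective q)
    (h : ∀ u : ellOne →L[ℝ] X, CompactOp u →
      ∃ (w : ellOne →L[ℝ] Z) (v : Z →L[ℝ] X),
        CompactOp w ∧ ApproxOp v ∧ u = v.comp w) :
    PropertyF X := by
  intro K hK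
  rcases K.eq_empty_or_nonempty with rfl | ⟨x0, hx0⟩
  · exact ⟨0, approxOp_zero, by simp⟩
  -- A dense sequence in K
  haveI : TopologicalSpace.SeparableSpace K := hK.isSeparable.separableSpace
  haveI : Nonempty K := ⟨⟨x0, hx0⟩⟩
  set k : ℕ → X := fun n => (TopologicalSpace.denseSeq K n : X) with hk
  have hkK : ∀ n, k n ∈ K := fun n => (TopologicalSpace.denseSeq K n).2
  have hKk : K ⊆ closure (Set.range k) := by
    intro x hx
    have h1 : (⟨x, hx⟩ : K) ∈ closure (Set.range (TopologicalSpace.denseSeq K)) := by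
      rw [(TopologicalSpace.denseRange_denseSeq K).closure_range]; trivial
    exact map_mem_closure continuous_subtype_val h1 (by rintro _ ⟨n, rfl⟩; exact ⟨n, rfl⟩)
  -- a bound on K
  obtain ⟨r, hr⟩ := hK.isBounded.subset_closedBall 0
  set M : ℝ := max r 1 with hM
  have hMpos : (0 : ℝ) < M := lt_of_lt_of_le one_pos (le_max_right _ _)
  have hk_norm : ∀ n, ‖k n‖ ≤ M := fun n => by
    have := hr (hkK n)
    rw [mem_closedBall_zero_iff] at this
    exact this.trans (le_max_left _ _)
  -- summability facts
  have hsum : ∀ a : ellOne, Summable fun n => (a : ∀ _ : ℕ, ℝ) n • k n := by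
    intro a
    refine Summable.of_norm (Summable.of_nonneg_of_le (fun n => norm_nonneg _)
      (fun n => ?_) ((ellOne_summable_norm a).mul_right M))
    rw [norm_smul]
    exact mul_le_mul_of_nonneg_left (hk_norm n) (norm_nonneg _)
  -- the operator u : ℓ₁ → X
  set u₀ : ellOne →ₗ[ℝ] X :=
    { toFun := fun a => ∑' n, (a : ∀ _ : ℕ, ℝ) n • k n
      map_add' := fun a b => by
        dsimp only
        have h1 : (fun n => ((a + b : ellOne) : ∀ _ : ℕ, ℝ) n • k n)
            = fun n => (a : ∀ _ : ℕ, ℝ) n • k n + (b : ∀ _ : ℕ, ℝ) n • k n := by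
          funext n
          rw [lp.coeFn_add]
          simp [add_smul]
        rw [h1, Summable.tsum_add (hsum a) (hsum b)]
      map_smul' := fun c a => by
        dsimp only
        have h1 : (fun n => ((c • a : ellOne) : ∀ _ : ℕ, ℝ) n • k n)
            = fun n => c • ((a : ∀ _ : ℕ, ℝ) n • k n) := by
          funext n
          rw [lp.coeFn_smul]
          simp [smul_smul]
        rw [h1, Summable.tsum_const_smul c (hsum a)]
        rfl } with hu₀
  have hu₀_bound : ∀ a : ellOne, ‖u₀ a‖ ≤ M * ‖a‖ := by
    intro a
    have h1 : ‖u₀ a‖ ≤ ∑' n, ‖(a : ∀ _ : ℕ, ℝ) n • k n‖ := by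
      refine norm_tsum_le_tsum_norm ?_
      refine Summable.of_nonneg_of_le (fun n => norm_nonneg _) (fun n => ?_)
        ((ellOne_summable_norm a).mul_right M)
      rw [norm_smul]
      exact mul_le_mul_of_nonneg_left (hk_norm n) (norm_nonneg _)
    have h2 : ∑' n, ‖(a : ∀ _ : ℕ, ℝ) n • k n‖ ≤ ∑' n, ‖(a : ∀ _ : ℕ, ℝ) n‖ * M := by
      refine Summable.tsum_le_tsum (fun n => ?_)
        (Summable.of_nonneg_of_le (fun n => norm_nonneg _) (fun n => by
          rw [norm_smul]
          exact mul_le_mul_of_nonneg_left (hk_norm n) (norm_nonneg _))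
          ((ellOne_summable_norm a).mul_right M))
        ((ellOne_summable_norm a).mul_right M)
      rw [norm_smul]
      exact mul_le_mul_of_nonneg_left (hk_norm n) (norm_nonneg _)
    have h3 : ∑' n, ‖(a : ∀ _ : ℕ, ℝ) n‖ * M = M * ‖a‖ := by
      rw [tsum_mul_right, ellOne_norm_eq a, mul_comm]
    calc ‖u₀ a‖ ≤ ∑' n, ‖(a : ∀ _ : ℕ, ℝ) n • k n‖ := h1
      _ ≤ ∑' n, ‖(a : ∀ _ : ℕ, ℝ) n‖ * M := h2
      _ = M * ‖a‖ := h3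
  set u : ellOne →L[ℝ] X := u₀.mkContinuous M hu₀_bound with hu
  have hu_apply : ∀ a : ellOne, u a = ∑' n, (a : ∀ _ : ℕ, ℝ) n • k n := fun a => rfl
  -- u sends the n-th basis vector to k n
  have hu_single : ∀ n, u (lp.single 1 n (1 : ℝ)) = k n := by
    intro n
    rw [hu_apply]
    rw [tsum_eq_single n (fun m hm => by
      rw [lp.single_apply_ne 1 n _ hm, zero_smul])]
    rw [lp.single_apply_self, one_smul]
  have hsingle_mem : ∀ n, lp.single 1 n (1 : ℝ) ∈ Metric.closedBall (0 : ellOne) 1 := by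
    intro n
    rw [mem_closedBall_zero_iff]
    have := lp.norm_single (E := fun _ : ℕ => ℝ) (p := (1 : ENNReal)) (by norm_num) n (1 : ℝ)
    simp only [norm_one] at this
    exact le_of_eq this
  have hKu : K ⊆ closure (u '' Metric.closedBall 0 1) := by
    refine hKk.trans (closure_mono ?_)
    rintro _ ⟨n, rfl⟩
    exact ⟨lp.single 1 n (1 : ℝ), hsingle_mem n, hu_single n⟩
  -- u is a compact operator
  have hu_compact : CompactOp u := by
    set S : Set X := K ∪ (-K) ∪ {0} with hS
    have hScomp : IsCompact S :=
      (hK.union (hK.neg)).union isCompact_singleton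
    have h0S : (0 : X) ∈ S := by simp [hS]
    have hC_compact : IsCompact (closure (convexHull ℝ S)) := by
      refine TotallyBounded.isCompact_of_isClosed ?_ isClosed_closure
      exact (totallyBounded_convexHull.mpr hScomp.totallyBounded).closure
    refine IsCompact.of_isClosed_subset hC_compact isClosed_closure
      (closure_minimal ?_ isClosed_closure)
    rintro _ ⟨a, ha, rfl⟩
    rw [mem_closedBall_zero_iff] at ha
    -- partial sums are in the convex hull
    have hpartial : ∀ N : ℕ,
        ∑ n ∈ Finset.range N, (a : ∀ _ : ℕ, ℝ) n • k n ∈ convexHull ℝ S := by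
      intro N
      set s : ℕ → X := fun n => if 0 ≤ (a : ∀ _ : ℕ, ℝ) n then k n else -(k n) with hs
      have heq : ∀ n, (a : ∀ _ : ℕ, ℝ) n • k n = ‖(a : ∀ _ : ℕ, ℝ) n‖ • s n := by
        intro n
        by_cases hn : 0 ≤ (a : ∀ _ : ℕ, ℝ) n
        · simp [hs, hn, Real.norm_eq_abs, abs_of_nonneg hn]
        · push_neg at hn
          simp [hs, not_le.mpr hn, Real.norm_eq_abs, abs_of_neg hn, smul_neg, neg_smul]
      have hsS : ∀ n, s n ∈ S := by
        intro n
        by_cases hn : 0 ≤ (a : ∀ _ : ℕ, ℝ) n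
        · simp only [hs, if_pos hn]
          exact Or.inl (Or.inl (hkK n))
        · simp only [hs, if_neg hn]
          exact Or.inl (Or.inr (by simpa using hkK n))
      have hcoef : ∑ n ∈ Finset.range N, ‖(a : ∀ _ : ℕ, ℝ) n‖ ≤ 1 := by
        refine le_trans ?_ ((ellOne_norm_eq a ▸ ha))
        exact Summable.sum_le_tsum (Finset.range N) (fun n _ => norm_nonneg _) (ellOne_summable_norm a)
      rw [Finset.sum_congr rfl (fun n _ => heq n)]
      exact sum_smul_mem_convex (convex_convexHull ℝ S)
        (subset_convexHull ℝ S h0S) N _ _ (fun n => norm_nonneg _)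
        (fun n => subset_convexHull ℝ S (hsS n)) hcoef
    have htend := (hsum a).hasSum.tendsto_sum_nat
    rw [← hu_apply] at htend
    exact mem_closure_of_tendsto htend (Eventually.of_forall hpartial)
  -- factor u through Z and assemble
  obtain ⟨w, v, hw, hv, huvw⟩ := h u hu_compact
  obtain ⟨C, hCpos, hC⟩ := q.exists_preimage_norm_le hq
  set M₂ : ℝ := C * ‖w‖ + 1 with hM₂
  have hM₂pos : 0 < M₂ := by positivity
  refine ⟨v.comp (M₂ • q), approxOp_comp hv (M₂ • q), ?_⟩
  refine hKu.trans (closure_mono ?_)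
  rintro _ ⟨a, ha, rfl⟩
  rw [mem_closedBall_zero_iff] at ha
  obtain ⟨x, hx1, hx2⟩ := hC (w a)
  have hxnorm : ‖x‖ ≤ M₂ := by
    have h1 : ‖w a‖ ≤ ‖w‖ := by
      calc ‖w a‖ ≤ ‖w‖ * ‖a‖ := w.le_opNorm a
        _ ≤ ‖w‖ * 1 := by
          exact mul_le_mul_of_nonneg_left ha (norm_nonneg _)
        _ = ‖w‖ := mul_one _
    calc ‖x‖ ≤ C * ‖w a‖ := hx2
      _ ≤ C * ‖w‖ := mul_le_mul_of_nonneg_left h1 (le_of_lt hCpos)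
      _ ≤ M₂ := by rw [hM₂]; linarith
  refine ⟨M₂⁻¹ • x, ?_, ?_⟩
  · rw [mem_closedBall_zero_iff, norm_smul, norm_inv, Real.norm_eq_abs,
      abs_of_pos hM₂pos]
    rw [inv_mul_le_iff₀ hM₂pos, mul_one]
    exact hxnorm
  · have : (M₂ • q) (M₂⁻¹ • x) = q x := by
      rw [ContinuousLinearMap.smul_apply, map_smul, smul_smul,
        mul_inv_cancel₀ (ne_of_gt hM₂pos), one_smul]
    rw [ContinuousLinearMap.comp_apply, this, hx1, huvw]
    rfl
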